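/- Let T be a binary tree structure with at least one internal node. For all integers m and c with 1 ≤ c ≤ m ≤ L_T, the c-partitioning function of the tree class T on ℝ^ℓ satisfies π^c_T(m) = S(m, c), the Stirling number of the second kind counting the c-partitions of an m-element set. -/

import Mathlib

/-- A `c`-partition of a finite set `S`: a set of `c` pairwise disjoint nonempty
subsets (parts) whose union is `S`. -/
def IsPartition {α : Type*} (S : Finset α) (c : ℕ) (P : Finset (Finset α)) : Prop :=
  P.card = c ∧ (∀ p ∈ P, p.Nonempty) ∧
    (∀ p ∈ P, ∀ q ∈ P, p ≠ q → Disjoint p q) ∧ (∀ x, x ∈ S ↔ ∃ p ∈ P, x ∈ p)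

/-- A binary tree structure: either a leaf, or an internal node with a left and a
right subtree structure. -/
inductive TreeStruct : Type where
  | leaf : TreeStruct
  | node : TreeStruct → TreeStruct → TreeStruct
deriving DecidableEq

namespace TreeStruct

/-- The number of leaves of a binary tree structure. -/
def leaves : TreeStruct → ℕ
  | leaf => 1
  | node l r => l.leaves + r.leaves

/-- The number of internal nodes of a binary tree structure. -/
def internals : TreeStruct → ℕ
  | leaf => 0
  | node l r => l.internals + r.internals + 1

end TreeStruct

/-- A decision tree on `ℝ^ℓ` with labels in `Y`: every leaf carries a label and every
internal node carries a decision rule `(i, θ, s)` with feature `i`, threshold `θ` and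
sign `s` (`true` codes `+1`, `false` codes `-1`). -/
inductive DTree (ℓ : ℕ) (Y : Type) : Type where
  | leaf : Y → DTree ℓ Y
  | node : Fin ℓ → ℝ → Bool → DTree ℓ Y → DTree ℓ Y → DTree ℓ Y

namespace DTree

/-- The output of a decision tree on an example `x`: at a node with rule `(i, θ, s)`,
`x` is sent to the left subtree if `sign (x^i - θ) = s` (i.e. `(θ < x^i) = s`) and to
the right subtree otherwise. -/
noncomputable def eval {ℓ : ℕ} {Y : Type} : DTree ℓ Y → (Fin ℓ → ℝ) → Y
  | leaf y, _ => y
  | node i θ s l r, x => if decide (θ < x i) = s then l.eval x else r.eval x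

/-- The underlying structure of a decision tree. -/
def shape {ℓ : ℕ} {Y : Type} : DTree ℓ Y → TreeStruct
  | leaf _ => .leaf
  | node _ _ _ l r => .node l.shape r.shape

end DTree

/-- A partition `P` of a sample `S ⊆ ℝ^ℓ` is realizable by the class of decision trees
with structure `T` if there is a decision tree `t` with structure `T` (labels in `ℕ`)
such that two points of `S` lie in the same part of `P` iff `t` outputs the same label
on them. -/
def TreeRealizable (ℓ : ℕ) (T : TreeStruct) (S : Finset (Fin ℓ → ℝ))
    (P : Finset (Finset (Fin ℓ → ℝ))) : Prop :=
  ∃ t : DTree ℓ ℕ, t.shape = T ∧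
    ∀ x ∈ S, ∀ y ∈ S, ((∃ p ∈ P, x ∈ p ∧ y ∈ p) ↔ t.eval x = t.eval y)

/-- `PartSet ℓ T a S` : the set of `a`-partitions of `S` realizable by the tree class `T`. -/
def PartSet (ℓ : ℕ) (T : TreeStruct) (a : ℕ) (S : Finset (Fin ℓ → ℝ)) :
    Set (Finset (Finset (Fin ℓ → ℝ))) :=
  {P | IsPartition S a P ∧ TreeRealizable ℓ T S P}

/-- The `a`-partitioning function of the tree class `T` on `ℝ^ℓ`: the largest number of
distinct `a`-partitions realizable by `T` on a sample of `m` points. -/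
noncomputable def treePi (ℓ : ℕ) (T : TreeStruct) (a m : ℕ) : ℕ :=
  sSup {n : ℕ | ∃ S : Finset (Fin ℓ → ℝ), S.card = m ∧ n = (PartSet ℓ T a S).ncard}

/-- The Stirling number of the second kind `S(m, c)`: the number of `c`-partitions of
an `m`-element set. -/
noncomputable def stirlingSnd (m c : ℕ) : ℕ :=
  {P : Finset (Finset (Fin m)) | IsPartition Finset.univ c P}.ncard


lemma exists_tree (ℓ : ℕ) (hℓ : 1 ≤ ℓ) (T : TreeStruct) :
    ∀ a b : ℕ, b - a ≤ T.leaves → ∀ g : ℕ → ℕ,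
    ∃ t : DTree ℓ ℕ, t.shape = T ∧
      ∀ j, a ≤ j → j < b → t.eval (fun _ => (j:ℝ)) = g j := by
  induction T with
  | leaf =>
    intro a b hb g
    refine ⟨.leaf (g a), rfl, ?_⟩
    intro j h1 h2
    have hba : b - a ≤ 1 := hb
    have : j = a := by omega
    subst this
    rfl
  | node l r ihl ihr =>
    intro a b hb g
    have hb' : b - a ≤ l.leaves + r.leaves := hb
    set k := min (b - a) l.leaves with hk
    set mid := a + k with hmid
    obtain ⟨tl, hls, hle⟩ := ihl a mid (by omega) g
    obtain ⟨tr, hrs, hre⟩ := ihr mid b (by omega) g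
    refine ⟨.node ⟨0, hℓ⟩ ((mid:ℝ) - 1/2) false tl tr, by simp [DTree.shape, hls, hrs], ?_⟩
    intro j h1 h2
    show (if decide ((mid:ℝ) - 1/2 < (j:ℝ)) = false then tl.eval _ else tr.eval _) = g j
    rcases lt_or_ge j mid with hj | hj
    · have hcast : (j:ℝ) ≤ (mid:ℝ) - 1/2 := by
        have : (j:ℝ) + 1 ≤ (mid:ℝ) := by exact_mod_cast hj
        linarith
      rw [if_pos (by simpa using not_lt.mpr hcast)]
      exact hle j h1 hj
    · have hcast : (mid:ℝ) - 1/2 < (j:ℝ) := by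
        have : (mid:ℝ) ≤ (j:ℝ) := by exact_mod_cast hj
        linarith
      rw [if_neg (by simpa using hcast)]
      exact hre j hj h2

lemma partitions_finite {α : Type*} [DecidableEq α] (S : Finset α) (c : ℕ) :
    {P : Finset (Finset α) | IsPartition S c P}.Finite := by
  apply Set.Finite.subset (S.powerset.powerset : Finset (Finset (Finset α))).finite_toSet
  intro P hP
  rw [Finset.mem_coe, Finset.mem_powerset]
  intro p hp
  rw [Finset.mem_powerset]
  intro x hx
  exact (hP.2.2.2 x).2 ⟨p, hp, hx⟩

lemma ncard_partitions {α β : Type*} [DecidableEq α] [DecidableEq β] [Fintype α]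
    (f : α → β) (g : β → α) (S : Finset β)
    (hfg : ∀ a, g (f a) = a) (hgf : ∀ x ∈ S, f (g x) = x)
    (hfS : ∀ a, f a ∈ S) (c : ℕ) :
    {Q : Finset (Finset β) | IsPartition S c Q}.ncard
      = {P : Finset (Finset α) | IsPartition Finset.univ c P}.ncard := by
  have hfinj : Function.Injective f := by
    intro a b h; have := congrArg g h; simpa [hfg] using this
  have hΦinj : Function.Injective (Finset.image (Finset.image f)) :=
    Finset.image_injective (Finset.image_injective hfinj)
  have himg : (Finset.image (Finset.image f)) ''
      {P : Finset (Finset α) | IsPartition Finset.univ c P}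
      = {Q : Finset (Finset β) | IsPartition S c Q} := by
    ext Q
    constructor
    · rintro ⟨P, ⟨hcard, hne, hdisj, hcov⟩, rfl⟩
      refine ⟨by rw [Finset.card_image_of_injective _ (Finset.image_injective hfinj), hcard],
        ?_, ?_, ?_⟩
      · rintro q hq
        obtain ⟨p, hp, rfl⟩ := Finset.mem_image.mp hq
        exact (hne p hp).image f
      · rintro q1 hq1 q2 hq2 hne12
        obtain ⟨p1, hp1, rfl⟩ := Finset.mem_image.mp hq1
        obtain ⟨p2, hp2, rfl⟩ := Finset.mem_image.mp hq2
        have : p1 ≠ p2 := fun h => hne12 (by rw [h])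
        exact (Finset.disjoint_image hfinj).mpr (hdisj p1 hp1 p2 hp2 this)
      · intro x
        constructor
        · intro hx
          obtain ⟨p, hp, hgx⟩ := (hcov (g x)).1 (Finset.mem_univ _)
          exact ⟨p.image f, Finset.mem_image_of_mem _ hp,
            by rw [← hgf x hx]; exact Finset.mem_image_of_mem f hgx⟩
        · rintro ⟨q, hq, hxq⟩
          obtain ⟨p, hp, rfl⟩ := Finset.mem_image.mp hq
          obtain ⟨a, ha, rfl⟩ := Finset.mem_image.mp hxq
          exact hfS a
    · rintro ⟨hcard, hne, hdisj, hcov⟩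
      have hsub : ∀ q ∈ Q, ∀ x ∈ q, x ∈ S := fun q hq x hx => (hcov x).2 ⟨q, hq, hx⟩
      have hback : ∀ q ∈ Q, (q.image g).image f = q := by
        intro q hq
        rw [Finset.image_image]
        rw [show q.image (f ∘ g) = q.image id from
          Finset.image_congr (fun x hx => hgf x (hsub q hq x hx))]
        exact Finset.image_id
      refine ⟨Q.image (Finset.image g), ⟨?_, ?_, ?_, ?_⟩, ?_⟩
      · rw [Finset.card_image_of_injOn, hcard]
        intro q1 hq1 q2 hq2 h
        rw [← hback q1 hq1, ← hback q2 hq2, h]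
      · rintro p hp
        obtain ⟨q, hq, rfl⟩ := Finset.mem_image.mp hp
        exact (hne q hq).image g
      · rintro p1 hp1 p2 hp2 hne12
        obtain ⟨q1, hq1, rfl⟩ := Finset.mem_image.mp hp1
        obtain ⟨q2, hq2, rfl⟩ := Finset.mem_image.mp hp2
        have hq12 : q1 ≠ q2 := fun h => hne12 (by rw [h])
        have hd := hdisj q1 hq1 q2 hq2 hq12
        rw [Finset.disjoint_left]
        intro a ha1 ha2
        obtain ⟨x1, hx1, rfl⟩ := Finset.mem_image.mp ha1
        obtain ⟨x2, hx2, hx12⟩ := Finset.mem_image.mp ha2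
        have : x2 = x1 := by
          rw [← hgf x2 (hsub q2 hq2 x2 hx2), hx12, hgf x1 (hsub q1 hq1 x1 hx1)]
        rw [Finset.disjoint_left] at hd
        exact hd hx1 (this ▸ hx2)
      · intro a
        simp only [Finset.mem_univ, true_iff]
        obtain ⟨q, hq, hfa⟩ := (hcov (f a)).1 (hfS a)
        exact ⟨q.image g, Finset.mem_image_of_mem _ hq, by
          rw [← hfg a]; exact Finset.mem_image_of_mem g hfa⟩
      · rw [Finset.image_image]
        conv_rhs => rw [← Finset.image_id (s := Q)]
        exact Finset.image_congr (fun q hq => hback q hq)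
  rw [← himg, Set.ncard_image_of_injective _ hΦinj]

lemma ncard_partitions_of_card {α : Type*} [DecidableEq α] (S : Finset α) (m c : ℕ)
    (hSm : S.card = m) (h1 : 1 ≤ m) :
    {Q : Finset (Finset α) | IsPartition S c Q}.ncard = stirlingSnd m c := by
  have e : ↥S ≃ Fin m := S.equivFin.trans (finCongr hSm)
  set f : Fin m → α := fun a => ((e.symm a : S) : α) with hf
  set g : α → Fin m := fun x => if h : x ∈ S then e ⟨x, h⟩ else ⟨0, h1⟩ with hg
  have hfS : ∀ a, f a ∈ S := fun a => (e.symm a).2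
  have hfg : ∀ a, g (f a) = a := by
    intro a
    simp only [hg, hf, dif_pos (hfS a)]
    rw [dif_pos (show ((e.symm a : S) : α) ∈ S from (e.symm a).2)]
    rw [show (⟨((e.symm a : S) : α), hfS a⟩ : S) = e.symm a from Subtype.coe_eta _ _]
    exact e.apply_symm_apply a
  have hgf : ∀ x ∈ S, f (g x) = x := by
    intro x hx
    simp only [hg, hf, dif_pos hx]
    rw [e.symm_apply_apply]
  exact ncard_partitions f g S hfg hgf hfS c

theorem tree_partitioning_eq_stirling_of_small_sample
    (ℓ : ℕ) (hℓ : 1 ≤ ℓ) (T : TreeStruct) (hT : 1 ≤ T.internals)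
    (c m : ℕ) (hc : 1 ≤ c) (hcm : c ≤ m) (hm : m ≤ T.leaves) :
    treePi ℓ T c m = stirlingSnd m c := by
  classical
  have h1m : 1 ≤ m := le_trans hc hcm
  set N := {n : ℕ | ∃ S : Finset (Fin ℓ → ℝ), S.card = m ∧ n = (PartSet ℓ T c S).ncard}
    with hN
  -- upper bound
  have hub : ∀ n ∈ N, n ≤ stirlingSnd m c := by
    rintro n ⟨S, hS, rfl⟩
    rw [← ncard_partitions_of_card S m c hS h1m]
    exact Set.ncard_le_ncard (fun P hP => hP.1) (partitions_finite S c)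
  -- the witness sample
  set pointf : ℕ → (Fin ℓ → ℝ) := fun j => (fun _ : Fin ℓ => (j:ℝ)) with hpointf
  set S₀ : Finset (Fin ℓ → ℝ) := (Finset.range m).image pointf with hS₀
  have hinj : Function.Injective pointf := by
    intro a b h
    have := congrFun h ⟨0, hℓ⟩
    simp only [hpointf] at this
    exact_mod_cast this
  have hScard : S₀.card = m := by
    rw [hS₀, Finset.card_image_of_injective _ hinj, Finset.card_range]
  -- every partition of S₀ is realizable
  have hfull : PartSet ℓ T c S₀ = {Q : Finset (Finset (Fin ℓ → ℝ)) | IsPartition S₀ c Q} := by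
    apply Set.eq_of_subset_of_subset (fun P hP => hP.1)
    intro Q hQ
    refine ⟨hQ, ?_⟩
    obtain ⟨hcard, hne, hdisj, hcov⟩ := hQ
    have hex : ∀ x, x ∈ S₀ → ∃ q ∈ Q, x ∈ q := fun x hx => (hcov x).1 hx
    set pt : (Fin ℓ → ℝ) → Finset (Fin ℓ → ℝ) :=
      fun x => if h : x ∈ S₀ then (hex x h).choose else ∅ with hpt
    have hptQ : ∀ x, x ∈ S₀ → pt x ∈ Q ∧ x ∈ pt x := by
      intro x hx
      rw [hpt]
      simp only [dif_pos hx]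
      obtain ⟨h1, h2⟩ := (hex x hx).choose_spec
      exact ⟨h1, h2⟩
    have huniq : ∀ q ∈ Q, ∀ x ∈ S₀, x ∈ q → q = pt x := by
      intro q hq x hx hxq
      by_contra hne'
      have hd := hdisj q hq (pt x) (hptQ x hx).1 hne'
      rw [Finset.disjoint_left] at hd
      exact hd hxq (hptQ x hx).2
    obtain ⟨t, hts, hte⟩ := exists_tree ℓ hℓ T 0 m (by simpa using hm)
      (fun j => Q.toList.idxOf (pt (pointf j)))
    have heval : ∀ x ∈ S₀, t.eval x = Q.toList.idxOf (pt x) := by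
      intro x hx
      obtain ⟨j, hj, rfl⟩ := Finset.mem_image.mp hx
      have := hte j (Nat.zero_le j) (Finset.mem_range.mp hj)
      simp only [hpointf] at this ⊢
      exact this
    refine ⟨t, hts, ?_⟩
    intro x hx y hy
    rw [heval x hx, heval y hy]
    constructor
    · rintro ⟨p, hp, hxp, hyp⟩
      rw [← huniq p hp x hx hxp, ← huniq p hp y hy hyp]
    · intro h
      have hmx : pt x ∈ Q.toList := Finset.mem_toList.mpr (hptQ x hx).1
      have hmy : pt y ∈ Q.toList := Finset.mem_toList.mpr (hptQ y hy).1
      have hxy : pt x = pt y := (List.idxOf_inj hmx).mp h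
      exact ⟨pt x, (hptQ x hx).1, (hptQ x hx).2, hxy ▸ (hptQ y hy).2⟩
  have hmem : stirlingSnd m c ∈ N := by
    refine ⟨S₀, hScard, ?_⟩
    rw [hfull, ncard_partitions_of_card S₀ m c hScard h1m]
  -- conclude
  have hNne : N.Nonempty := ⟨_, hmem⟩
  have hbdd : BddAbove N := ⟨stirlingSnd m c, hub⟩
  exact le_antisymm (csSup_le hNne hub) (le_csSup hbdd hmem)
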